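/- Let ψ : [t₀,∞) → ℝ₊ be non-increasing with t·ψ(t) < 1 for all t ≥ t₀, and set Ψ(t) = 1/(1 − t·ψ(t)) − 1. If x ∈ [0,1) is irrational and a_{n+1}(x)·aₙ(x) > Ψ(qₙ(x)) for infinitely many n, then x is not ψ-Dirichlet improvable. -/

import Mathlib

open Set MeasureTheory Filter

/-- The Gauss map `T(x) = 1/x - ⌊1/x⌋` (with `T 0 = 0`). -/
noncomputable def gaussMap (x : ℝ) : ℝ := Int.fract x⁻¹

/-- The `n`-th partial quotient `aₙ(x)` (indexed from `n = 1`). -/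
noncomputable def cfA (x : ℝ) (n : ℕ) : ℕ := ⌊(gaussMap^[n - 1] x)⁻¹⌋₊

/-- Numerators `pₙ` of the convergents of `[b 1, b 2, ...]`:
`p₀ = 0`, `p₁ = 1` (since `p₋₁ = 1`), `p_{n+2} = b (n+2) p_{n+1} + pₙ`. -/
def cfP (b : ℕ → ℕ) : ℕ → ℕ
  | 0 => 0
  | 1 => 1
  | n + 2 => b (n + 2) * cfP b (n + 1) + cfP b n

/-- Denominators (continuants) `qₙ` of the convergents of `[b 1, b 2, ...]`:
`q₀ = 1`, `q₁ = b 1`, `q_{n+2} = b (n+2) q_{n+1} + qₙ`. -/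
def cfQ (b : ℕ → ℕ) : ℕ → ℕ
  | 0 => 1
  | 1 => b 1
  | n + 2 => b (n + 2) * cfQ b (n + 1) + cfQ b n

/-- The cylinder `Iₙ(b 1, ..., b n)` of order `n`. -/
noncomputable def cfCyl (b : ℕ → ℕ) (n : ℕ) : Set ℝ :=
  {x ∈ Set.Ico (0 : ℝ) 1 | ∀ i, 1 ≤ i → i ≤ n → cfA x i = b i}

/-- `x` is `ψ`-Dirichlet improvable: for all sufficiently large `t` the system
`|qx - p| < ψ(t)`, `|q| < t` has a nontrivial integer solution. -/
def DirichletImprovable (ψ : ℝ → ℝ) (x : ℝ) : Prop :=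
  ∃ N : ℝ, ∀ t : ℝ, N < t → ∃ p q : ℤ, q ≠ 0 ∧ |(q : ℝ) * x - p| < ψ t ∧ |(q : ℝ)| < t

/-! ### Auxiliary lemmas -/

namespace KWaux

lemma gauss_iter_mem {x : ℝ} (hx : x ∈ Set.Ico (0 : ℝ) 1) (hirr : Irrational x) (n : ℕ) :
    gaussMap^[n] x ∈ Set.Ioo (0 : ℝ) 1 ∧ Irrational (gaussMap^[n] x) := by
  induction n with
  | zero =>
    simp only [Function.iterate_zero, id_eq]
    exact ⟨⟨lt_of_le_of_ne hx.1 (Ne.symm hirr.ne_zero), hx.2⟩, hirr⟩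
  | succ n ih =>
    rw [Function.iterate_succ_apply']
    set y := gaussMap^[n] x with hy
    have hyirr : Irrational y⁻¹ := ih.2.inv
    have hfr : Irrational (Int.fract y⁻¹) := by
      rw [Int.fract]; exact hyirr.sub_intCast _
    refine ⟨⟨?_, ?_⟩, hfr⟩
    · exact lt_of_le_of_ne (Int.fract_nonneg _) (Ne.symm hfr.ne_zero)
    · exact Int.fract_lt_one _

lemma gauss_inv_eq {x : ℝ} (hx : x ∈ Set.Ico (0 : ℝ) 1) (hirr : Irrational x) (n : ℕ) :
    (gaussMap^[n] x)⁻¹ = (cfA x (n + 1) : ℝ) + gaussMap^[n + 1] x := by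
  have hmem := (gauss_iter_mem hx hirr n).1
  have hinv : 0 ≤ (gaussMap^[n] x)⁻¹ := le_of_lt (inv_pos.2 hmem.1)
  rw [Function.iterate_succ_apply', gaussMap, Int.fract]
  have : cfA x (n + 1) = ⌊(gaussMap^[n] x)⁻¹⌋₊ := by
    simp [cfA]
  rw [this, natCast_floor_eq_intCast_floor hinv]
  ring

lemma cfA_ge_one {x : ℝ} (hx : x ∈ Set.Ico (0 : ℝ) 1) (hirr : Irrational x) (n : ℕ) :
    1 ≤ cfA x n := by
  have key : ∀ m : ℕ, 1 ≤ ⌊(gaussMap^[m] x)⁻¹⌋₊ := by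
    intro m
    have hmem := (gauss_iter_mem hx hirr m).1
    have : (1 : ℝ) ≤ (gaussMap^[m] x)⁻¹ := le_of_lt ((one_lt_inv₀ hmem.1).2 hmem.2)
    exact Nat.le_floor (by exact_mod_cast this)
  exact key (n - 1)

lemma cfQ_pos (b : ℕ → ℕ) (hb : ∀ i, 1 ≤ b i) : ∀ n, 1 ≤ cfQ b n := by
  intro n
  induction n using Nat.strong_induction_on with
  | _ n ih =>
    match n with
    | 0 => exact le_refl 1
    | 1 => exact hb 1
    | (m + 2) =>
      show 1 ≤ b (m + 2) * cfQ b (m + 1) + cfQ b m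
      have := ih m (by omega)
      omega

lemma cfQ_mul_le (b : ℕ → ℕ) (n : ℕ) : b (n + 1) * cfQ b n ≤ cfQ b (n + 1) := by
  match n with
  | 0 => simp [cfQ]
  | (m + 1) => show b (m + 2) * cfQ b (m + 1) ≤ b (m + 2) * cfQ b (m + 1) + cfQ b m; omega

lemma le_two_mul_cfQ (b : ℕ → ℕ) (hb : ∀ i, 1 ≤ b i) : ∀ n, n ≤ 2 * cfQ b n := by
  intro n
  induction n using Nat.strong_induction_on with
  | _ n ih =>
    match n with
    | 0 => omega
    | 1 => have := hb 1; show 1 ≤ 2 * cfQ b 1; show 1 ≤ 2 * b 1; omega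
    | (m + 2) =>
      have h1 := ih m (by omega)
      have h2 := cfQ_pos b hb (m + 1)
      have h3 := hb (m + 2)
      show m + 2 ≤ 2 * (b (m + 2) * cfQ b (m + 1) + cfQ b m)
      nlinarith

lemma cf_det (b : ℕ → ℕ) : ∀ n, (cfP b (n + 1) : ℤ) * cfQ b n - cfP b n * cfQ b (n + 1)
    = (-1) ^ n := by
  intro n
  induction n with
  | zero => simp [cfP, cfQ]
  | succ n ih =>
    have hp : (cfP b (n + 2) : ℤ) = b (n + 2) * cfP b (n + 1) + cfP b n := by
      show ((cfP b (n + 2) : ℤ)) = _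
      rw [show cfP b (n + 2) = b (n + 2) * cfP b (n + 1) + cfP b n from rfl]
      push_cast; ring
    have hq : (cfQ b (n + 2) : ℤ) = b (n + 2) * cfQ b (n + 1) + cfQ b n := by
      rw [show cfQ b (n + 2) = b (n + 2) * cfQ b (n + 1) + cfQ b n from rfl]
      push_cast; ring
    calc (cfP b (n + 2) : ℤ) * cfQ b (n + 1) - cfP b (n + 1) * cfQ b (n + 2)
        = -((cfP b (n + 1) : ℤ) * cfQ b n - cfP b n * cfQ b (n + 1)) := by
          rw [hp, hq]; ring
      _ = (-1) ^ (n + 1) := by rw [ih]; ring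

/-- Best approximation property of convergents. -/
lemma best_approx {x : ℝ} {pm pm1 qm qm1 : ℤ} (hqm : 1 ≤ qm) (hqm1 : 1 ≤ qm1)
    {d : ℤ} (hdet : pm1 * qm - pm * qm1 = d) (hd : d = 1 ∨ d = -1)
    {Dm Dm1 : ℝ} (hDm : 0 < Dm) (hDm1 : 0 < Dm1) {s : ℝ} (hs : s = 1 ∨ s = -1)
    (hΔm : (qm : ℝ) * x - pm = s * Dm) (hΔm1 : (qm1 : ℝ) * x - pm1 = -s * Dm1)
    {p q : ℤ} (hq : q ≠ 0) (hqlt : |q| < qm1) :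
    Dm ≤ |(q : ℝ) * x - p| := by
  set α : ℤ := d * (pm1 * q - qm1 * p) with hα
  set β : ℤ := d * (qm * p - pm * q) with hβ
  have hd2 : d * d = 1 := by rcases hd with h | h <;> simp [h]
  have hqeq : q = α * qm + β * qm1 := by
    have : α * qm + β * qm1 = d * (q * (pm1 * qm - pm * qm1)) := by rw [hα, hβ]; ring
    rw [this, hdet]
    rcases hd with h | h <;> simp [h]
  have hpeq : p = α * pm + β * pm1 := by
    have : α * pm + β * pm1 = d * (p * (pm1 * qm - pm * qm1)) := by rw [hα, hβ]; ring
    rw [this, hdet]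
    rcases hd with h | h <;> simp [h]
  have hval : (q : ℝ) * x - p = s * ((α : ℝ) * Dm - (β : ℝ) * Dm1) := by
    have h1 : (q : ℝ) = α * qm + β * qm1 := by exact_mod_cast congrArg (Int.cast : ℤ → ℝ) hqeq
    have h2 : (p : ℝ) = α * pm + β * pm1 := by exact_mod_cast congrArg (Int.cast : ℤ → ℝ) hpeq
    calc (q : ℝ) * x - p = (α : ℝ) * ((qm : ℝ) * x - pm) + (β : ℝ) * ((qm1 : ℝ) * x - pm1) := by
          rw [h1, h2]; ring
      _ = s * ((α : ℝ) * Dm - (β : ℝ) * Dm1) := by rw [hΔm, hΔm1]; ring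
  have habs : |(q : ℝ) * x - p| = |(α : ℝ) * Dm - (β : ℝ) * Dm1| := by
    rw [hval, abs_mul]
    rcases hs with h | h <;> simp [h]
  rw [habs]
  by_cases hβ0 : β = 0
  · -- q = α qm, α ≠ 0
    have hα0 : α ≠ 0 := by
      intro h0; apply hq; rw [hqeq, h0, hβ0]; ring
    have h1 : (1 : ℝ) ≤ |(α : ℝ)| := by
      have := Int.one_le_abs hα0
      calc (1 : ℝ) ≤ (|α| : ℤ) := by exact_mod_cast this
        _ = |(α : ℝ)| := by push_cast; rfl
    calc Dm = 1 * Dm := (one_mul _).symm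
      _ ≤ |(α : ℝ)| * Dm := by apply mul_le_mul_of_nonneg_right h1 hDm.le
      _ = |(α : ℝ) * Dm| := by rw [abs_mul, abs_of_pos hDm]
      _ = |(α : ℝ) * Dm - (β : ℝ) * Dm1| := by rw [hβ0]; simp
  · by_cases hα0 : α = 0
    · exfalso
      have : |q| = |β| * qm1 := by
        rw [hqeq, hα0, zero_mul, zero_add, abs_mul, abs_of_pos (by omega : (0:ℤ) < qm1)]
      have hβ1 : 1 ≤ |β| := Int.one_le_abs hβ0
      nlinarith [this, hqlt]
    · -- both nonzero
      rcases lt_trichotomy α 0 with hαneg | h0 | hαpos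
      · rcases lt_trichotomy β 0 with hβneg | h0 | hβpos
        · -- same sign (both neg): |q| ≥ qm1
          exfalso
          have h5 : q ≤ -qm1 := by nlinarith [hqeq]
          have h6 : qm1 ≤ |q| := by rcases abs_cases q with ⟨e, _⟩ | ⟨e, _⟩ <;> omega
          omega
        · exact absurd h0 hβ0
        · -- α < 0, β > 0 : value ≤ -Dm
          have hαle : (α : ℝ) ≤ -1 := by exact_mod_cast (by omega : α ≤ -1)
          have hβge : (1 : ℝ) ≤ (β : ℝ) := by exact_mod_cast (by omega : 1 ≤ β)
          have : (α : ℝ) * Dm - (β : ℝ) * Dm1 ≤ -Dm := by nlinarith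
          calc Dm ≤ -((α : ℝ) * Dm - (β : ℝ) * Dm1) := by linarith
            _ ≤ |(α : ℝ) * Dm - (β : ℝ) * Dm1| := neg_le_abs _
      · exact absurd h0 hα0
      · rcases lt_trichotomy β 0 with hβneg | h0 | hβpos
        · -- α > 0, β < 0 : value ≥ Dm
          have hαge : (1 : ℝ) ≤ (α : ℝ) := by exact_mod_cast (by omega : 1 ≤ α)
          have hβle : (β : ℝ) ≤ -1 := by exact_mod_cast (by omega : β ≤ -1)
          have : Dm ≤ (α : ℝ) * Dm - (β : ℝ) * Dm1 := by nlinarith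
          calc Dm ≤ (α : ℝ) * Dm - (β : ℝ) * Dm1 := this
            _ ≤ |(α : ℝ) * Dm - (β : ℝ) * Dm1| := le_abs_self _
        · exact absurd h0 hβ0
        · -- same sign (both pos): |q| ≥ qm1
          exfalso
          have : qm1 ≤ q := by nlinarith [hqeq]
          have : qm1 ≤ |q| := le_trans this (le_abs_self _)
          omega

end KWaux

open KWaux

theorem kleinbock_wadleigh_non_improvable (t₀ : ℝ) (ht₀ : 1 ≤ t₀) (ψ : ℝ → ℝ)
    (hψpos : ∀ t, t₀ ≤ t → 0 < ψ t)
    (hψmono : ∀ s t : ℝ, t₀ ≤ s → s ≤ t → ψ t ≤ ψ s)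
    (hψlt : ∀ t, t₀ ≤ t → t * ψ t < 1)
    (Ψ : ℝ → ℝ) (hΨ : ∀ t, Ψ t = 1 / (1 - t * ψ t) - 1)
    (x : ℝ) (hx : x ∈ Set.Ico (0 : ℝ) 1) (hirr : Irrational x)
    (h : {n : ℕ | 1 ≤ n ∧
      Ψ ((cfQ (cfA x) n : ℝ)) < (cfA x (n + 1) : ℝ) * (cfA x n : ℝ)}.Infinite) :
    ¬ DirichletImprovable ψ x := by
  set a : ℕ → ℕ := cfA x with ha
  set f : ℕ → ℝ := fun n => gaussMap^[n] x with hf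
  have hfm : ∀ n, f n ∈ Set.Ioo (0 : ℝ) 1 := fun n => (gauss_iter_mem hx hirr n).1
  have hinv : ∀ n, (f n)⁻¹ = (a (n + 1) : ℝ) + f (n + 1) := fun n => gauss_inv_eq hx hirr n
  have haone : ∀ i, 1 ≤ a i := fun i => cfA_ge_one hx hirr i
  set D : ℕ → ℝ := fun n => ∏ i ∈ Finset.range (n + 1), f i with hD
  have hDpos : ∀ n, 0 < D n := by
    intro n; apply Finset.prod_pos; intro i _; exact (hfm i).1
  have hDsucc : ∀ n, D (n + 1) = D n * f (n + 1) := by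
    intro n; rw [hD]; exact Finset.prod_range_succ f (n + 1)
  -- main identity
  have key : ∀ n, (cfQ a n : ℝ) * x - cfP a n = (-1 : ℝ) ^ n * D n := by
    have pair : ∀ n, ((cfQ a n : ℝ) * x - cfP a n = (-1 : ℝ) ^ n * D n) ∧
        ((cfQ a (n + 1) : ℝ) * x - cfP a (n + 1) = (-1 : ℝ) ^ (n + 1) * D (n + 1)) := by
      intro n
      induction n with
      | zero =>
        constructor
        · have hD0 : D 0 = x := by
            show (∏ i ∈ Finset.range 1, f i) = x
            rw [Finset.prod_range_one]
            rfl
          show (cfQ a 0 : ℝ) * x - cfP a 0 = (-1 : ℝ) ^ 0 * D 0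
          rw [show cfQ a 0 = 1 from rfl, show cfP a 0 = 0 from rfl, hD0]
          norm_num
        · have hx0 : f 0 = x := rfl
          have h1 : x⁻¹ = (a 1 : ℝ) + f 1 := by rw [← hx0]; exact hinv 0
          have hxne : x ≠ 0 := hirr.ne_zero
          have hD1 : D 1 = x * f 1 := by
            show (∏ i ∈ Finset.range 2, f i) = x * f 1
            rw [Finset.prod_range_succ, Finset.prod_range_one, hx0]
          show (cfQ a 1 : ℝ) * x - cfP a 1 = (-1 : ℝ) ^ 1 * D 1
          rw [show cfQ a 1 = a 1 from rfl, show cfP a 1 = 1 from rfl, hD1]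
          have ha1 : (a 1 : ℝ) = x⁻¹ - f 1 := by linarith
          rw [ha1]
          linear_combination inv_mul_cancel₀ hxne
      | succ n ih =>
        refine ⟨ih.2, ?_⟩
        have hq : (cfQ a (n + 2) : ℝ) = a (n + 2) * cfQ a (n + 1) + cfQ a n := by
          rw [show cfQ a (n + 2) = a (n + 2) * cfQ a (n + 1) + cfQ a n from rfl]
          push_cast; ring
        have hp : (cfP a (n + 2) : ℝ) = a (n + 2) * cfP a (n + 1) + cfP a n := by
          rw [show cfP a (n + 2) = a (n + 2) * cfP a (n + 1) + cfP a n from rfl]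
          push_cast; ring
        have hrel : f (n + 1) * ((a (n + 2) : ℝ) + f (n + 2)) = 1 := by
          rw [← hinv (n + 1)]
          exact mul_inv_cancel₀ (ne_of_gt (hfm (n + 1)).1)
        have hD1 : D (n + 1) = D n * f (n + 1) := hDsucc n
        have hD2 : D (n + 2) = D n * f (n + 1) * f (n + 2) := by
          rw [hDsucc (n + 1), hD1]
        show (cfQ a (n + 2) : ℝ) * x - cfP a (n + 2) = (-1 : ℝ) ^ (n + 2) * D (n + 2)
        rw [hq, hp, hD2]
        have e1 := ih.1
        have e2 := ih.2
        rw [hD1] at e2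
        linear_combination ((a (n + 2) : ℝ)) * e2 + e1 - ((-1 : ℝ) ^ n * D n) * hrel
    exact fun n => (pair n).1
  -- the `q (n+1) D n + q n D (n+1) = 1` identity
  have ident : ∀ n, (cfQ a (n + 1) : ℝ) * D n + (cfQ a n : ℝ) * D (n + 1) = 1 := by
    intro n
    have hdet := cf_det a n
    have hdetR : (cfP a (n + 1) : ℝ) * cfQ a n - cfP a n * cfQ a (n + 1) = (-1 : ℝ) ^ n := by
      exact_mod_cast congrArg (Int.cast : ℤ → ℝ) hdet
    have k1 := key n
    have k2 := key (n + 1)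
    have comb : (cfQ a (n + 1) : ℝ) * ((-1 : ℝ) ^ n * D n) -
        (cfQ a n : ℝ) * ((-1 : ℝ) ^ (n + 1) * D (n + 1)) = (-1 : ℝ) ^ n := by
      rw [← k1, ← k2]
      linear_combination hdetR
    have hne : ((-1 : ℝ) ^ n) ≠ 0 := pow_ne_zero _ (by norm_num)
    have : (-1 : ℝ) ^ n * ((cfQ a (n + 1) : ℝ) * D n + (cfQ a n : ℝ) * D (n + 1))
        = (-1 : ℝ) ^ n * 1 := by
      rw [mul_one]; linear_combination comb
    exact mul_left_cancel₀ hne this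
  -- now the main argument
  rintro ⟨N, hN⟩
  set M : ℕ := 2 * (⌈max N t₀⌉₊ + 1) with hM
  obtain ⟨n, hnS, hnM⟩ := h.exists_gt M
  obtain ⟨hn1, hcond⟩ := hnS
  obtain ⟨m, rfl⟩ : ∃ m, n = m + 1 := ⟨n - 1, by omega⟩
  set n := m + 1 with hn
  -- q n is large
  have hq2 : n ≤ 2 * cfQ a n := le_two_mul_cfQ a haone n
  have hqceil : ⌈max N t₀⌉₊ < cfQ a n := by omega
  have hqN : max N t₀ < (cfQ a n : ℝ) := by
    calc max N t₀ ≤ (⌈max N t₀⌉₊ : ℝ) := Nat.le_ceil _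
      _ < (cfQ a n : ℝ) := by exact_mod_cast hqceil
  set t : ℝ := (cfQ a n : ℝ) with htdef
  have htN : N < t := lt_of_le_of_lt (le_max_left _ _) hqN
  have htt₀ : t₀ ≤ t := le_of_lt (lt_of_le_of_lt (le_max_right _ _) hqN)
  have hψt : 0 < ψ t := hψpos t htt₀
  have hu : t * ψ t < 1 := hψlt t htt₀
  have ht1 : (1 : ℝ) ≤ t := by
    have := cfQ_pos a haone n
    exact_mod_cast Nat.one_le_cast.mpr this
  -- show ψ t < D m
  have hDmflt : D m > ψ t := by
    -- f (n) < 1 / a (n+1) : a(n+1) * f n < 1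
    have hfB : (a (n + 1) : ℝ) * f n < 1 := by
      have h1 : (f n)⁻¹ = (a (n + 1) : ℝ) + f (n + 1) := hinv n
      have h2 : (a (n + 1) : ℝ) < (f n)⁻¹ := by
        rw [h1]; linarith [(hfm (n + 1)).1]
      have h3 : 0 < f n := (hfm n).1
      calc (a (n + 1) : ℝ) * f n < (f n)⁻¹ * f n := by
            apply mul_lt_mul_of_pos_right h2 h3
        _ = 1 := inv_mul_cancel₀ (ne_of_gt h3)
    -- a n * q m ≤ q n
    have hAq : (a n : ℝ) * (cfQ a m : ℝ) ≤ t := by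
      have h0 := cfQ_mul_le a m
      rw [htdef, hn]
      exact_mod_cast h0
    have hA1 : (1 : ℝ) ≤ (a n : ℝ) := by exact_mod_cast haone n
    have hB1 : (1 : ℝ) ≤ (a (n + 1) : ℝ) := by exact_mod_cast haone (n + 1)
    have hqm1 : (1 : ℝ) ≤ (cfQ a m : ℝ) := by exact_mod_cast cfQ_pos a haone m
    have hfn : 0 < f n ∧ f n < 1 := ⟨(hfm n).1, (hfm n).2⟩
    -- condition: u / (1 - u) < A * B with u = t ψ t
    have hΨt := hΨ t
    rw [hΨt] at hcond
    have h1u : 0 < 1 - t * ψ t := by linarith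
    have hcond' : t * ψ t < (a (n + 1) : ℝ) * (a n : ℝ) * (1 - t * ψ t) := by
      have : 1 / (1 - t * ψ t) - 1 = (t * ψ t) / (1 - t * ψ t) := by
        field_simp
        ring
      rw [this] at hcond
      rw [div_lt_iff₀ h1u] at hcond
      linarith [hcond]
    have hu0 : 0 < t * ψ t := mul_pos (by linarith) hψt
    -- q m * f n * ψ t * (A * B) < u  < A*B*(1-u)
    have step1 : (cfQ a m : ℝ) * f n * ψ t * ((a n : ℝ) * (a (n + 1) : ℝ)) < t * ψ t := by
      have e1 : (cfQ a m : ℝ) * f n * ψ t * ((a n : ℝ) * (a (n + 1) : ℝ))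
          = ((a n : ℝ) * (cfQ a m : ℝ)) * ((a (n + 1) : ℝ) * f n) * ψ t := by ring
      rw [e1]
      have h2 : ((a n : ℝ) * (cfQ a m : ℝ)) * ((a (n + 1) : ℝ) * f n) * ψ t
          ≤ t * ((a (n + 1) : ℝ) * f n) * ψ t := by
        apply mul_le_mul_of_nonneg_right _ hψt.le
        apply mul_le_mul_of_nonneg_right hAq
        exact mul_nonneg (by positivity) (hfm n).1.le
      have h3 : t * ((a (n + 1) : ℝ) * f n) * ψ t < t * 1 * ψ t := by
        apply mul_lt_mul_of_pos_right _ hψt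
        apply mul_lt_mul_of_pos_left hfB (by linarith)
      calc ((a n : ℝ) * (cfQ a m : ℝ)) * ((a (n + 1) : ℝ) * f n) * ψ t
          ≤ t * ((a (n + 1) : ℝ) * f n) * ψ t := h2
        _ < t * 1 * ψ t := h3
        _ = t * ψ t := by ring
    have hAB : 0 < (a n : ℝ) * (a (n + 1) : ℝ) := by positivity
    have step2 : (cfQ a m : ℝ) * f n * ψ t < 1 - t * ψ t := by
      have h4 : (cfQ a m : ℝ) * f n * ψ t * ((a n : ℝ) * (a (n + 1) : ℝ))
          < (1 - t * ψ t) * ((a n : ℝ) * (a (n + 1) : ℝ)) := by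
        calc (cfQ a m : ℝ) * f n * ψ t * ((a n : ℝ) * (a (n + 1) : ℝ))
            < t * ψ t := step1
          _ < (a (n + 1) : ℝ) * (a n : ℝ) * (1 - t * ψ t) := hcond'
          _ = (1 - t * ψ t) * ((a n : ℝ) * (a (n + 1) : ℝ)) := by ring
      exact lt_of_mul_lt_mul_right h4 hAB.le
    -- conclude: ψ t * (t + q m * f n) < 1 = D m * (t + q m * f n)
    have hDn : D n = D m * f n := hDsucc m
    have hsum : D m * (t + (cfQ a m : ℝ) * f n) = 1 := by
      have hid2 := ident m
      rw [← hn] at hid2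
      rw [hDn] at hid2
      rw [htdef]
      linarith [hid2]
    have hpos : 0 < t + (cfQ a m : ℝ) * f n := by
      have := mul_nonneg (by positivity : (0:ℝ) ≤ (cfQ a m : ℝ)) (hfm n).1.le
      linarith
    have hlt : ψ t * (t + (cfQ a m : ℝ) * f n) < 1 := by
      have : ψ t * (t + (cfQ a m : ℝ) * f n) = t * ψ t + (cfQ a m : ℝ) * f n * ψ t := by ring
      rw [this]; linarith
    nlinarith [hsum, hlt, hpos]
  -- apply Dirichlet-improvability at time t and derive a contradiction
  obtain ⟨p, q, hq0, habs, hqlt⟩ := hN t htN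
  -- |q| < q n as integers
  have hqltZ : |q| < (cfQ a n : ℤ) := by
    have h1 : |(q : ℝ)| < ((cfQ a n : ℕ) : ℝ) := htdef ▸ hqlt
    exact_mod_cast h1
  -- best approximation
  have hdet := cf_det a m
  have hkm := key m
  have hkn := key n
  have hDmp := hDpos m
  have hDnp := hDpos n
  have hqmZ : (1 : ℤ) ≤ (cfQ a m : ℤ) := by exact_mod_cast cfQ_pos a haone m
  have hqnZ : (1 : ℤ) ≤ (cfQ a n : ℤ) := by exact_mod_cast cfQ_pos a haone n
  have hdZ : ((-1 : ℤ) ^ m = 1 ∨ (-1 : ℤ) ^ m = -1) := by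
    rcases Nat.even_or_odd m with he | ho
    · exact Or.inl (Even.neg_one_pow he)
    · exact Or.inr (Odd.neg_one_pow ho)
  have hsR : ((-1 : ℝ) ^ m = 1 ∨ (-1 : ℝ) ^ m = -1) := by
    rcases Nat.even_or_odd m with he | ho
    · exact Or.inl (Even.neg_one_pow he)
    · exact Or.inr (Odd.neg_one_pow ho)
  have hΔm : ((cfQ a m : ℤ) : ℝ) * x - ((cfP a m : ℤ) : ℝ) = (-1 : ℝ) ^ m * D m := by
    push_cast; push_cast at hkm; linarith [hkm]
  have hΔn : ((cfQ a n : ℤ) : ℝ) * x - ((cfP a n : ℤ) : ℝ) = -(-1 : ℝ) ^ m * D n := by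
    push_cast; push_cast at hkn
    have : (-1 : ℝ) ^ n = -(-1 : ℝ) ^ m := by rw [hn, pow_succ]; ring
    rw [this] at hkn; linarith [hkn]
  have hdetZ : (cfP a n : ℤ) * (cfQ a m : ℤ) - (cfP a m : ℤ) * (cfQ a n : ℤ) = (-1) ^ m := hdet
  have hbest := best_approx (x := x) (p := p) hqmZ hqnZ hdetZ hdZ hDmp hDnp hsR hΔm hΔn hq0 hqltZ
  linarith [habs, hDmflt, hbest]
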